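/- Let h : (-π-δ, π+δ) × ℝ^d → ℂ be polyharmonic of order N (i.e., C^{2N} with (∂²/∂t² + Δ_y)^N h = 0), odd at t = 0, t = π, and t = -π. Then for each positive integer k, the Fourier coefficient a_k(y) = (1/π) ∫_{-π}^{π} h(t,y) sin(kt) dt satisfies (Δ_y - k²)^N a_k(y) = 0 for all y ∈ ℝ^d. -/

import Mathlib

open Set

/-- The Laplacian of `f : ℝ × ℝ^d → ℂ` in all `1 + d` variables, computed as the
sum of second derivatives along the coordinate directions. -/
noncomputable def lap {d : ℕ} (f : ℝ × EuclideanSpace ℝ (Fin d) → ℂ) :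
    ℝ × EuclideanSpace ℝ (Fin d) → ℂ := fun p =>
  iteratedDeriv 2 (fun s : ℝ => f (p.1 + s, p.2)) 0 +
    ∑ i : Fin d,
      iteratedDeriv 2 (fun s : ℝ => f (p.1, p.2 + s • EuclideanSpace.single i (1 : ℝ))) 0

/-- `f` is polyharmonic of order `N` on `S`: it is `C^{2N}` on `S` and `Δ^N f = 0` on `S`. -/
def PolyharmonicOn {d : ℕ} (N : ℕ) (f : ℝ × EuclideanSpace ℝ (Fin d) → ℂ)
    (S : Set (ℝ × EuclideanSpace ℝ (Fin d))) : Prop :=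
  ContDiffOn ℝ (2 * N : ℕ) f S ∧ ∀ p ∈ S, (lap^[N] f) p = 0

/-- `u` is odd at `t₀` relative to the strip `(a,b) × ℝ^d`. -/
def OddAt {d : ℕ} (u : ℝ × EuclideanSpace ℝ (Fin d) → ℂ) (a b t₀ : ℝ) : Prop :=
  ∀ t : ℝ, ∀ y : EuclideanSpace ℝ (Fin d), t₀ + t ∈ Ioo a b → t₀ - t ∈ Ioo a b →
    u (t₀ + t, y) = -u (t₀ - t, y)

/-- The Laplacian in the `y`-variables for functions on `ℝ^d`. -/
noncomputable def lapY {d : ℕ} (f : EuclideanSpace ℝ (Fin d) → ℂ) :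
    EuclideanSpace ℝ (Fin d) → ℂ := fun y =>
  ∑ i : Fin d, iteratedDeriv 2 (fun s : ℝ => f (y + s • EuclideanSpace.single i (1 : ℝ))) 0

noncomputable section AuxPH

variable {E : Type*} [NormedAddCommGroup E] [NormedSpace ℝ E]

/-- directional derivative operator -/
noncomputable def dirD (v : E) (f : E → ℂ) : E → ℂ := fun q => fderiv ℝ f q v

lemma contDiffOn_dirD {f : E → ℂ} {U : Set E} {n : ℕ} (hU : IsOpen U)
    (hf : ContDiffOn ℝ ((n:ℕ) + 1) f U) (v : E) : ContDiffOn ℝ (n : ℕ) (dirD v f) U := by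
  have h1 : ContDiffOn ℝ n (fderiv ℝ f) U := hf.fderiv_of_isOpen hU (by norm_cast)
  exact h1.clm_apply contDiffOn_const

lemma hasDerivAt_line {f : E → ℂ} {U : Set E} (hU : IsOpen U)
    (hf : ContDiffOn ℝ (1:ℕ) f U) (q v : E) (s : ℝ) (hq : q + s • v ∈ U) :
    HasDerivAt (fun s : ℝ => f (q + s • v)) (dirD v f (q + s • v)) s := by
  have hdiff : DifferentiableAt ℝ f (q + s • v) :=
    (hf.differentiableOn (by norm_num)).differentiableAt (hU.mem_nhds hq)
  have haff : HasDerivAt (fun s : ℝ => q + s • v) v s := by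
    simpa using ((hasDerivAt_id s).smul_const v).const_add q
  exact hdiff.hasFDerivAt.comp_hasDerivAt s haff

lemma dirD_two {f : E → ℂ} {U : Set E} (hU : IsOpen U)
    (hf : ContDiffOn ℝ (2:ℕ) f U) {p : E} (hp : p ∈ U) (v : E) :
    iteratedDeriv 2 (fun s : ℝ => f (p + s • v)) 0 = dirD v (dirD v f) p := by
  have hf1 : ContDiffOn ℝ (1:ℕ) f U := hf.of_le (by norm_cast)
  have hd1 : ContDiffOn ℝ (1:ℕ) (dirD v f) U := contDiffOn_dirD (n := 1) hU hf v
  have hcont : Continuous (fun s : ℝ => p + s • v) := by fun_prop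
  have hO : IsOpen ((fun s : ℝ => p + s • v) ⁻¹' U) := hU.preimage hcont
  have h0 : (0:ℝ) ∈ (fun s : ℝ => p + s • v) ⁻¹' U := by simp [hp]
  have hev : deriv (fun s : ℝ => f (p + s • v)) =ᶠ[nhds 0]
      (fun s => dirD v f (p + s • v)) := by
    filter_upwards [hO.mem_nhds h0] with s hs
    exact (hasDerivAt_line hU hf1 p v s hs).deriv
  have h2 : iteratedDeriv 2 (fun s : ℝ => f (p + s • v)) 0
      = deriv (deriv (fun s : ℝ => f (p + s • v))) 0 := by
    rw [iteratedDeriv_succ, iteratedDeriv_one]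
  rw [h2, hev.deriv_eq]
  have := (hasDerivAt_line hU hd1 p v 0 (by simpa using hp)).deriv
  simpa using this

end AuxPH

section Spec
variable {d : ℕ}

abbrev PT (d : ℕ) := ℝ × EuclideanSpace ℝ (Fin d)

noncomputable def v0 (d : ℕ) : PT d := (1, 0)
noncomputable def vy (d : ℕ) (i : Fin d) : PT d := (0, EuclideanSpace.single i (1:ℝ))

lemma add_smul_v0 (q : PT d) (s : ℝ) : q + s • (v0 d) = (q.1 + s, q.2) := by
  simp [v0, Prod.ext_iff]

lemma add_smul_vy (q : PT d) (i : Fin d) (s : ℝ) :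
    q + s • (vy d i) = (q.1, q.2 + s • EuclideanSpace.single i (1:ℝ)) := by
  simp [vy, Prod.ext_iff]

noncomputable def Dsum (f : PT d → ℂ) : PT d → ℂ :=
  fun p => dirD (v0 d) (dirD (v0 d) f) p + ∑ i, dirD (vy d i) (dirD (vy d i) f) p

lemma lap_eq_Dsum {f : PT d → ℂ} {S : Set (PT d)} (hS : IsOpen S)
    (hf : ContDiffOn ℝ (2:ℕ) f S) {p : PT d} (hp : p ∈ S) :
    lap f p = Dsum f p := by
  unfold lap Dsum
  have h0 := dirD_two hS hf hp (v0 d)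
  simp only [add_smul_v0] at h0
  rw [h0]
  congr 1
  refine Finset.sum_congr rfl fun i _ => ?_
  have hi := dirD_two hS hf hp (vy d i)
  simp only [add_smul_vy] at hi
  exact hi

lemma lap_congr {f g : PT d → ℂ} {O : Set (PT d)} (hO : IsOpen O) (hfg : EqOn f g O)
    {p : PT d} (hp : p ∈ O) : lap f p = lap g p := by
  have key : ∀ v : PT d, iteratedDeriv 2 (fun s : ℝ => f (p + s • v)) 0
      = iteratedDeriv 2 (fun s : ℝ => g (p + s • v)) 0 := by
    intro v
    have hcont : Continuous (fun s : ℝ => p + s • v) := by fun_prop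
    have hO' : IsOpen ((fun s : ℝ => p + s • v) ⁻¹' O) := hO.preimage hcont
    have hev : (fun s : ℝ => f (p + s • v)) =ᶠ[nhds 0] (fun s => g (p + s • v)) := by
      filter_upwards [hO'.mem_nhds (by simp [hp])] with s hs
      exact hfg hs
    rw [iteratedDeriv_succ, iteratedDeriv_one, iteratedDeriv_succ, iteratedDeriv_one,
      (hev.deriv).deriv_eq]
  unfold lap
  have h0 := key (v0 d)
  simp only [add_smul_v0] at h0
  rw [h0]
  congr 1
  refine Finset.sum_congr rfl fun i _ => ?_
  have hi := key (vy d i)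
  simp only [add_smul_vy] at hi
  exact hi

end Spec

section OddSec
open Set
variable {d : ℕ}

def strip (d : ℕ) (δ : ℝ) : Set (PT d) :=
  Ioo (-Real.pi - δ) (Real.pi + δ) ×ˢ (univ : Set (EuclideanSpace ℝ (Fin d)))

lemma isOpen_strip {δ : ℝ} : IsOpen (strip d δ) := isOpen_Ioo.prod isOpen_univ

lemma mem_strip {δ : ℝ} {t : ℝ} {y : EuclideanSpace ℝ (Fin d)} :
    (t, y) ∈ strip d δ ↔ t ∈ Ioo (-Real.pi - δ) (Real.pi + δ) := by simp [strip]

lemma refl_odd_deriv {g : ℝ → ℂ} {c ε : ℝ}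
    (hg : ∀ τ ∈ Ioo (c - ε) (c + ε), g τ = -g (2 * c - τ)) :
    ∀ τ ∈ Ioo (c - ε) (c + ε), deriv g τ = deriv g (2 * c - τ) := by
  intro τ hτ
  have hev : g =ᶠ[nhds τ] fun x => -g (2 * c - x) := by
    filter_upwards [isOpen_Ioo.mem_nhds hτ] with x hx; exact hg x hx
  rw [hev.deriv_eq, deriv.fun_neg, deriv_comp_const_sub, neg_neg]

lemma refl_even_deriv {g : ℝ → ℂ} {c ε : ℝ}
    (hg : ∀ τ ∈ Ioo (c - ε) (c + ε), g τ = g (2 * c - τ)) :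
    ∀ τ ∈ Ioo (c - ε) (c + ε), deriv g τ = -deriv g (2 * c - τ) := by
  intro τ hτ
  have hev : g =ᶠ[nhds τ] fun x => g (2 * c - x) := by
    filter_upwards [isOpen_Ioo.mem_nhds hτ] with x hx; exact hg x hx
  rw [hev.deriv_eq, deriv_comp_const_sub]

lemma dirD_v0_eq_deriv {δ : ℝ} {f : PT d → ℂ} (hf : ContDiffOn ℝ (2:ℕ) f (strip d δ))
    {τ : ℝ} (y : EuclideanSpace ℝ (Fin d))
    (hτ : τ ∈ Ioo (-Real.pi - δ) (Real.pi + δ)) :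
    dirD (v0 d) (dirD (v0 d) f) (τ, y) = deriv (deriv (fun x : ℝ => f (x, y))) τ := by
  have hp : ((τ, y) : PT d) ∈ strip d δ := mem_strip.2 hτ
  have h := dirD_two isOpen_strip hf hp (v0 d)
  simp only [add_smul_v0] at h
  rw [← h]
  have : (fun s : ℝ => f (τ + s, y)) = fun s : ℝ => (fun x : ℝ => f (x, y)) (τ + s) := rfl
  rw [this, iteratedDeriv_comp_const_add 2 (fun x : ℝ => f (x, y)) τ]
  simp [iteratedDeriv_succ, iteratedDeriv_one]

lemma Dsum_odd {δ : ℝ} (hδ : 0 < δ) {f : PT d → ℂ}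
    (hf : ContDiffOn ℝ (2:ℕ) f (strip d δ)) {c : ℝ}
    (hc : c = Real.pi ∨ c = -Real.pi)
    (hodd : OddAt f (-Real.pi - δ) (Real.pi + δ) c) :
    OddAt (Dsum f) (-Real.pi - δ) (Real.pi + δ) c := by
  have hπ := Real.pi_pos
  have Hsub : Ioo (c - δ) (c + δ) ⊆ Ioo (-Real.pi - δ) (Real.pi + δ) := by
    rcases hc with rfl | rfl <;> exact fun τ hτ => ⟨by cases hτ; linarith, by cases hτ; linarith⟩
  have Hadm : ∀ t : ℝ, c + t ∈ Ioo (-Real.pi - δ) (Real.pi + δ) →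
      c - t ∈ Ioo (-Real.pi - δ) (Real.pi + δ) → c + t ∈ Ioo (c - δ) (c + δ) := by
    rcases hc with rfl | rfl <;>
      exact fun t h1 h2 => ⟨by cases h1; cases h2; linarith, by cases h1; cases h2; linarith⟩
  intro t y htp htm
  have hpp : ((c + t, y) : PT d) ∈ strip d δ := mem_strip.2 htp
  have hpm : ((c - t, y) : PT d) ∈ strip d δ := mem_strip.2 htm
  unfold Dsum
  have hy : ∀ i : Fin d, dirD (vy d i) (dirD (vy d i) f) (c + t, y)
      = -dirD (vy d i) (dirD (vy d i) f) (c - t, y) := by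
    intro i
    have h1 := dirD_two isOpen_strip hf hpp (vy d i)
    have h2 := dirD_two isOpen_strip hf hpm (vy d i)
    simp only [add_smul_vy] at h1 h2
    rw [← h1, ← h2]
    have hfun : (fun s : ℝ => f (c + t, y + s • EuclideanSpace.single i (1:ℝ)))
        = fun s : ℝ => -f (c - t, y + s • EuclideanSpace.single i (1:ℝ)) := by
      funext s; exact hodd t _ htp htm
    rw [hfun, iteratedDeriv_fun_neg]
  have ht : dirD (v0 d) (dirD (v0 d) f) (c + t, y)
      = -dirD (v0 d) (dirD (v0 d) f) (c - t, y) := by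
    set g : ℝ → ℂ := fun x => f (x, y) with hg
    have hgodd : ∀ τ ∈ Ioo (c - δ) (c + δ), g τ = -g (2 * c - τ) := by
      intro τ hτ
      have hτ' : c + (τ - c) ∈ Ioo (-Real.pi - δ) (Real.pi + δ) := by
        rw [show c + (τ - c) = τ by ring]; exact Hsub hτ
      have hτ'' : c - (τ - c) ∈ Ioo (-Real.pi - δ) (Real.pi + δ) := by
        rw [show c - (τ - c) = 2 * c - τ by ring]
        refine Hsub ⟨by cases hτ; linarith, by cases hτ; linarith⟩
      have := hodd (τ - c) y hτ' hτ''
      rw [show c + (τ - c) = τ by ring, show c - (τ - c) = 2 * c - τ by ring] at this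
      exact this
    have heven := refl_odd_deriv hgodd
    have hodd2 := refl_even_deriv (g := deriv g) (fun τ hτ => heven τ hτ)
    have hmem : c + t ∈ Ioo (c - δ) (c + δ) := Hadm t htp htm
    have := hodd2 (c + t) hmem
    rw [show 2 * c - (c + t) = c - t by ring] at this
    rw [dirD_v0_eq_deriv hf y htp, dirD_v0_eq_deriv hf y htm]
    exact this
  rw [ht]
  rw [neg_add]
  congr 1
  rw [← Finset.sum_neg_distrib]
  exact Finset.sum_congr rfl fun i _ => hy i

end OddSec

section DUI
open Set MeasureTheory intervalIntegral
open scoped Interval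
variable {d : ℕ}

lemma strip_mem {δ : ℝ} (hδ : 0 < δ) {t : ℝ} (ht : t ∈ Icc (-Real.pi) Real.pi)
    (y : EuclideanSpace ℝ (Fin d)) : ((t, y) : PT d) ∈ strip d δ := by
  have hπ := Real.pi_pos
  exact mem_strip.2 ⟨by cases ht; linarith, by cases ht; linarith⟩

set_option maxHeartbeats 1000000 in
lemma DUI_step {δ : ℝ} (hδ : 0 < δ) (k : ℕ) {f : PT d → ℂ}
    (hf : ContDiffOn ℝ (1:ℕ) f (strip d δ)) (z : EuclideanSpace ℝ (Fin d)) (i : Fin d)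
    (s₀ : ℝ) :
    HasDerivAt
      (fun s : ℝ => ∫ t in (-Real.pi)..Real.pi,
        f (t, z + s • EuclideanSpace.single i (1:ℝ)) * (Real.sin (k * t) : ℂ))
      (∫ t in (-Real.pi)..Real.pi,
        dirD (vy d i) f (t, z + s₀ • EuclideanSpace.single i (1:ℝ)) * (Real.sin (k * t) : ℂ))
      s₀ := by
  have hπ := Real.pi_pos
  set e := EuclideanSpace.single i (1:ℝ) with he
  have hIoc : Ι (-Real.pi) Real.pi = Ioc (-Real.pi) Real.pi := uIoc_of_le (by linarith)
  have hIccIoo : Icc (-Real.pi) Real.pi ⊆ Ioo (-Real.pi - δ) (Real.pi + δ) :=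
    fun t ht => ⟨by cases ht; linarith, by cases ht; linarith⟩
  have hcf : ContinuousOn f (strip d δ) := hf.continuousOn
  have hcd : ContinuousOn (dirD (vy d i) f) (strip d δ) :=
    (contDiffOn_dirD (n := 0) isOpen_strip hf (vy d i)).continuousOn
  have hsin : Continuous fun t : ℝ => (Real.sin (k * t) : ℂ) := by fun_prop
  -- continuity of the slice maps
  have hγ : ∀ x : ℝ, Continuous fun t : ℝ => ((t, z + x • e) : PT d) := by
    intro x; fun_prop
  have hmapsIcc : ∀ x : ℝ, MapsTo (fun t : ℝ => ((t, z + x • e) : PT d))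
      (Icc (-Real.pi) Real.pi) (strip d δ) := fun x t ht => strip_mem hδ ht _
  have hFcont : ∀ x : ℝ, ContinuousOn
      (fun t : ℝ => f (t, z + x • e) * (Real.sin (k * t) : ℂ)) (Icc (-Real.pi) Real.pi) :=
    fun x => ((hcf.comp (hγ x).continuousOn (hmapsIcc x)).mul hsin.continuousOn)
  have hF'cont : ∀ x : ℝ, ContinuousOn
      (fun t : ℝ => dirD (vy d i) f (t, z + x • e) * (Real.sin (k * t) : ℂ))
      (Icc (-Real.pi) Real.pi) :=
    fun x => ((hcd.comp (hγ x).continuousOn (hmapsIcc x)).mul hsin.continuousOn)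
  -- bound
  set K : Set (ℝ × ℝ) := Icc (s₀ - 1) (s₀ + 1) ×ˢ Icc (-Real.pi) Real.pi with hK
  have hKc : IsCompact K := isCompact_Icc.prod isCompact_Icc
  have hGcont : ContinuousOn
      (fun q : ℝ × ℝ => dirD (vy d i) f (q.2, z + q.1 • e) * (Real.sin (k * q.2) : ℂ)) K := by
    have hm : Continuous fun q : ℝ × ℝ => ((q.2, z + q.1 • e) : PT d) := by fun_prop
    have hmaps : MapsTo (fun q : ℝ × ℝ => ((q.2, z + q.1 • e) : PT d)) K (strip d δ) :=
      fun q hq => strip_mem hδ hq.2 _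
    exact (hcd.comp hm.continuousOn hmaps).mul (by fun_prop)
  obtain ⟨C, hC⟩ := hKc.exists_bound_of_continuousOn hGcont
  have hsubI : Ι (-Real.pi) Real.pi ⊆ Icc (-Real.pi) Real.pi := by
    rw [hIoc]; exact Ioc_subset_Icc_self
  have hmeasI : MeasurableSet (Ι (-Real.pi) Real.pi) := measurableSet_uIoc
  have hFmeas : ∀ x : ℝ, AEStronglyMeasurable
      (fun t : ℝ => f (t, z + x • e) * (Real.sin (k * t) : ℂ))
      (volume.restrict (Ι (-Real.pi) Real.pi)) :=
    fun x => ((hFcont x).mono hsubI).aestronglyMeasurable hmeasI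
  have hF'meas : AEStronglyMeasurable
      (fun t : ℝ => dirD (vy d i) f (t, z + s₀ • e) * (Real.sin (k * t) : ℂ))
      (volume.restrict (Ι (-Real.pi) Real.pi)) :=
    ((hF'cont s₀).mono hsubI).aestronglyMeasurable hmeasI
  have hFint : IntervalIntegrable
      (fun t : ℝ => f (t, z + s₀ • e) * (Real.sin (k * t) : ℂ))
      volume (-Real.pi) Real.pi :=
    ContinuousOn.intervalIntegrable (by rw [uIcc_of_le (by linarith)]; exact hFcont s₀)
  have hbound : ∀ᵐ t : ℝ ∂volume, t ∈ Ι (-Real.pi) Real.pi →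
      ∀ x ∈ Metric.ball s₀ 1,
        ‖dirD (vy d i) f (t, z + x • e) * (Real.sin (k * t) : ℂ)‖ ≤ C := by
    refine Filter.Eventually.of_forall fun t ht x hx => ?_
    have ht' : t ∈ Icc (-Real.pi) Real.pi := hsubI ht
    have hx' : x ∈ Icc (s₀ - 1) (s₀ + 1) := by
      rw [Metric.mem_ball, Real.dist_eq] at hx
      have := abs_lt.1 hx
      exact ⟨by linarith [this.1], by linarith [this.2]⟩
    exact hC (x, t) ⟨hx', ht'⟩
  have hdiff : ∀ᵐ t : ℝ ∂volume, t ∈ Ι (-Real.pi) Real.pi →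
      ∀ x ∈ Metric.ball s₀ 1,
        HasDerivAt (fun x : ℝ => f (t, z + x • e) * (Real.sin (k * t) : ℂ))
          (dirD (vy d i) f (t, z + x • e) * (Real.sin (k * t) : ℂ)) x := by
    refine Filter.Eventually.of_forall fun t ht x _ => ?_
    have ht' : t ∈ Icc (-Real.pi) Real.pi := hsubI ht
    have hq : ((t, z) : PT d) + x • vy d i ∈ strip d δ := by
      rw [add_smul_vy]; exact strip_mem hδ ht' _
    have h1 := (hasDerivAt_line isOpen_strip hf ((t, z) : PT d) (vy d i) x hq).mul_const
      ((Real.sin (k * t) : ℂ))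
    simp only [add_smul_vy] at h1
    exact h1
  exact (intervalIntegral.hasDerivAt_integral_of_dominated_loc_of_deriv_le (Metric.ball_mem_nhds s₀ one_pos)
    (Filter.Eventually.of_forall hFmeas) hFint hF'meas hbound intervalIntegrable_const hdiff).2

end DUI

section IBP
open Set MeasureTheory intervalIntegral
variable {d : ℕ}

set_option maxHeartbeats 1000000 in
lemma t_part {δ : ℝ} (hδ : 0 < δ) (k : ℕ) {f : PT d → ℂ}
    (hf : ContDiffOn ℝ (2:ℕ) f (strip d δ)) (z : EuclideanSpace ℝ (Fin d))
    (hfp : f (Real.pi, z) = 0) (hfm : f (-Real.pi, z) = 0) :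
    ∫ t in (-Real.pi)..Real.pi, dirD (v0 d) (dirD (v0 d) f) (t, z) * (Real.sin (k * t) : ℂ)
      = -((k:ℂ)^2) * ∫ t in (-Real.pi)..Real.pi, f (t, z) * (Real.sin (k * t) : ℂ) := by
  have hπ := Real.pi_pos
  have hf1 : ContDiffOn ℝ (1:ℕ) f (strip d δ) := hf.of_le (by norm_cast)
  have hd1 : ContDiffOn ℝ (1:ℕ) (dirD (v0 d) f) (strip d δ) :=
    contDiffOn_dirD (n := 1) isOpen_strip hf (v0 d)
  set g : ℝ → ℂ := fun t => f (t, z) with hg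
  set g1 : ℝ → ℂ := fun t => dirD (v0 d) f (t, z) with hg1
  set g2 : ℝ → ℂ := fun t => dirD (v0 d) (dirD (v0 d) f) (t, z) with hg2
  have hIcc : uIcc (-Real.pi) Real.pi = Icc (-Real.pi) Real.pi := uIcc_of_le (by linarith)
  have hmem : ∀ t ∈ uIcc (-Real.pi) Real.pi, ((t, z) : PT d) ∈ strip d δ := by
    intro t ht; rw [hIcc] at ht; exact strip_mem hδ ht z
  -- derivatives of g and g1
  have hgd : ∀ t ∈ uIcc (-Real.pi) Real.pi, HasDerivAt g (g1 t) t := by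
    intro t ht
    have hq : ((0, z) : PT d) + t • v0 d ∈ strip d δ := by
      rw [add_smul_v0]; simpa using hmem t ht
    have h1 := hasDerivAt_line isOpen_strip hf1 ((0, z) : PT d) (v0 d) t hq
    simp only [add_smul_v0, zero_add] at h1
    exact h1
  have hg1d : ∀ t ∈ uIcc (-Real.pi) Real.pi, HasDerivAt g1 (g2 t) t := by
    intro t ht
    have hq : ((0, z) : PT d) + t • v0 d ∈ strip d δ := by
      rw [add_smul_v0]; simpa using hmem t ht
    have h1 := hasDerivAt_line isOpen_strip hd1 ((0, z) : PT d) (v0 d) t hq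
    simp only [add_smul_v0, zero_add] at h1
    exact h1
  -- trig functions
  set su : ℝ → ℂ := fun t => (Real.sin (k * t) : ℂ) with hsu
  set su' : ℝ → ℂ := fun t => ((Real.cos (k * t) * k : ℝ) : ℂ) with hsu'
  set su'' : ℝ → ℂ := fun t => ((-Real.sin (k * t) * k * k : ℝ) : ℂ) with hsu''
  have hkt : ∀ t : ℝ, HasDerivAt (fun t : ℝ => (k:ℝ) * t) ((k:ℝ)) t := by
    intro t; simpa using (hasDerivAt_id t).const_mul (k:ℝ)
  have hsud : ∀ t : ℝ, HasDerivAt su (su' t) t := by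
    intro t
    have := ((Real.hasDerivAt_sin ((k:ℝ) * t)).comp t (hkt t)).ofReal_comp
    simpa [hsu, hsu'] using this
  have hsu'd : ∀ t : ℝ, HasDerivAt su' (su'' t) t := by
    intro t
    have := (((Real.hasDerivAt_cos ((k:ℝ) * t)).comp t (hkt t)).mul_const (k:ℝ)).ofReal_comp
    refine HasDerivAt.congr_deriv this ?_
    simp only [hsu'']
    try (push_cast; ring)
  -- continuity / integrability
  have hcsl : Continuous fun t : ℝ => ((t, z) : PT d) := by fun_prop
  have hmaps : MapsTo (fun t : ℝ => ((t, z) : PT d)) (uIcc (-Real.pi) Real.pi) (strip d δ) :=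
    fun t ht => hmem t ht
  have hgc : ContinuousOn g (uIcc (-Real.pi) Real.pi) :=
    (hf.continuousOn.comp hcsl.continuousOn hmaps)
  have hg1c : ContinuousOn g1 (uIcc (-Real.pi) Real.pi) :=
    (hd1.continuousOn.comp hcsl.continuousOn hmaps)
  have hg2c : ContinuousOn g2 (uIcc (-Real.pi) Real.pi) :=
    ((contDiffOn_dirD (n := 0) isOpen_strip hd1 (v0 d)).continuousOn.comp
      hcsl.continuousOn hmaps)
  have hg1i : IntervalIntegrable g1 volume (-Real.pi) Real.pi := hg1c.intervalIntegrable
  have hg2i : IntervalIntegrable g2 volume (-Real.pi) Real.pi := hg2c.intervalIntegrable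
  have hsu'i : IntervalIntegrable su' volume (-Real.pi) Real.pi := by
    apply Continuous.intervalIntegrable; fun_prop
  have hsu''i : IntervalIntegrable su'' volume (-Real.pi) Real.pi := by
    apply Continuous.intervalIntegrable; fun_prop
  -- boundary values
  have hsupi : su Real.pi = 0 := by
    simp only [hsu]; norm_cast; exact Real.sin_nat_mul_pi k
  have hsumi : su (-Real.pi) = 0 := by
    simp only [hsu]; norm_cast
    rw [show (k:ℝ) * -Real.pi = -((k:ℝ) * Real.pi) by ring, Real.sin_neg,
      Real.sin_nat_mul_pi]; simp
  have hgp : g Real.pi = 0 := hfp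
  have hgm : g (-Real.pi) = 0 := hfm
  -- first integration by parts
  have ibp1 := intervalIntegral.integral_mul_deriv_eq_deriv_mul
    (u := su) (v := g1) (fun x _ => hsud x) hg1d hsu'i hg2i
  -- second integration by parts
  have ibp2 := intervalIntegral.integral_mul_deriv_eq_deriv_mul
    (u := su') (v := g) (fun x _ => hsu'd x) hgd hsu''i hg1i
  rw [hsupi, hsumi] at ibp1
  rw [hgp, hgm] at ibp2
  simp only [zero_mul, mul_zero, zero_sub, sub_zero] at ibp1 ibp2
  have e1 : (fun t => g2 t * su t) = fun t => su t * g2 t := by funext t; ring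
  calc ∫ t in (-Real.pi)..Real.pi, g2 t * su t
      = ∫ t in (-Real.pi)..Real.pi, su t * g2 t := by rw [e1]
    _ = -∫ t in (-Real.pi)..Real.pi, su' t * g1 t := by rw [ibp1]
    _ = ∫ t in (-Real.pi)..Real.pi, su'' t * g t := by rw [ibp2, neg_neg]
    _ = ∫ t in (-Real.pi)..Real.pi, -((k:ℂ)^2) * (g t * su t) := by
        apply intervalIntegral.integral_congr
        intro t ht
        simp only [hsu'', hsu, hg]
        push_cast; ring
    _ = -((k:ℂ)^2) * ∫ t in (-Real.pi)..Real.pi, g t * su t := by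
        rw [intervalIntegral.integral_const_mul]
end IBP

section KeyStep
open Set MeasureTheory intervalIntegral
variable {d : ℕ}

set_option maxHeartbeats 1000000 in
lemma key_step {δ : ℝ} (hδ : 0 < δ) (k : ℕ) {f : PT d → ℂ}
    (hf : ContDiffOn ℝ (2:ℕ) f (strip d δ))
    (hop : OddAt f (-Real.pi - δ) (Real.pi + δ) Real.pi)
    (hom : OddAt f (-Real.pi - δ) (Real.pi + δ) (-Real.pi))
    (z : EuclideanSpace ℝ (Fin d)) :
    lapY (fun z' => (Real.pi)⁻¹ •
        ∫ t in (-Real.pi)..Real.pi, f (t, z') * (Real.sin (k * t) : ℂ)) z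
      - (k:ℂ)^2 * ((Real.pi)⁻¹ •
        ∫ t in (-Real.pi)..Real.pi, f (t, z) * (Real.sin (k * t) : ℂ))
    = (Real.pi)⁻¹ •
        ∫ t in (-Real.pi)..Real.pi, Dsum f (t, z) * (Real.sin (k * t) : ℂ) := by
  have hπ := Real.pi_pos
  have hf1 : ContDiffOn ℝ (1:ℕ) f (strip d δ) := hf.of_le (by norm_cast)
  have hIcc : uIcc (-Real.pi) Real.pi = Icc (-Real.pi) Real.pi := uIcc_of_le (by linarith)
  have hcsl : Continuous fun t : ℝ => ((t, z) : PT d) := by fun_prop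
  have hmaps : MapsTo (fun t : ℝ => ((t, z) : PT d)) (uIcc (-Real.pi) Real.pi) (strip d δ) := by
    intro t ht; rw [hIcc] at ht; exact strip_mem hδ ht z
  have hsin : Continuous fun t : ℝ => (Real.sin (k * t) : ℂ) := by fun_prop
  -- second derivatives in the y directions under the integral
  have hterm : ∀ i : Fin d,
      iteratedDeriv 2 (fun s : ℝ => (Real.pi)⁻¹ •
        ∫ t in (-Real.pi)..Real.pi,
          f (t, z + s • EuclideanSpace.single i (1:ℝ)) * (Real.sin (k * t) : ℂ)) 0
      = (Real.pi)⁻¹ • ∫ t in (-Real.pi)..Real.pi,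
          dirD (vy d i) (dirD (vy d i) f) (t, z) * (Real.sin (k * t) : ℂ) := by
    intro i
    have hd1 : ContDiffOn ℝ (1:ℕ) (dirD (vy d i) f) (strip d δ) :=
      contDiffOn_dirD (n := 1) isOpen_strip hf (vy d i)
    have hD1 : ∀ s₀ : ℝ, HasDerivAt
        (fun s : ℝ => (Real.pi)⁻¹ • ∫ t in (-Real.pi)..Real.pi,
          f (t, z + s • EuclideanSpace.single i (1:ℝ)) * (Real.sin (k * t) : ℂ))
        ((Real.pi)⁻¹ • ∫ t in (-Real.pi)..Real.pi,
          dirD (vy d i) f (t, z + s₀ • EuclideanSpace.single i (1:ℝ)) * (Real.sin (k * t) : ℂ))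
        s₀ := fun s₀ => (DUI_step hδ k hf1 z i s₀).const_smul ((Real.pi)⁻¹)
    have hD2 : HasDerivAt
        (fun s₀ : ℝ => (Real.pi)⁻¹ • ∫ t in (-Real.pi)..Real.pi,
          dirD (vy d i) f (t, z + s₀ • EuclideanSpace.single i (1:ℝ)) * (Real.sin (k * t) : ℂ))
        ((Real.pi)⁻¹ • ∫ t in (-Real.pi)..Real.pi,
          dirD (vy d i) (dirD (vy d i) f)
            (t, z + (0:ℝ) • EuclideanSpace.single i (1:ℝ)) * (Real.sin (k * t) : ℂ))
        0 := (DUI_step hδ k hd1 z i 0).const_smul ((Real.pi)⁻¹)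
    have hderiv1 : deriv (fun s : ℝ => (Real.pi)⁻¹ • ∫ t in (-Real.pi)..Real.pi,
        f (t, z + s • EuclideanSpace.single i (1:ℝ)) * (Real.sin (k * t) : ℂ))
        = fun s₀ : ℝ => (Real.pi)⁻¹ • ∫ t in (-Real.pi)..Real.pi,
          dirD (vy d i) f (t, z + s₀ • EuclideanSpace.single i (1:ℝ)) * (Real.sin (k * t) : ℂ) :=
      funext fun s₀ => (hD1 s₀).deriv
    rw [iteratedDeriv_succ, iteratedDeriv_one, hderiv1]
    have := hD2.deriv
    rw [this]
    simp
  have hlapY : lapY (fun z' => (Real.pi)⁻¹ •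
      ∫ t in (-Real.pi)..Real.pi, f (t, z') * (Real.sin (k * t) : ℂ)) z
      = (Real.pi)⁻¹ • ∫ t in (-Real.pi)..Real.pi,
        (∑ i : Fin d, dirD (vy d i) (dirD (vy d i) f) (t, z)) * (Real.sin (k * t) : ℂ) := by
    unfold lapY
    rw [Finset.sum_congr rfl fun i _ => hterm i]
    rw [← Finset.smul_sum]
    congr 1
    rw [← intervalIntegral.integral_finset_sum]
    · congr 1; funext t; rw [Finset.sum_mul]
    · intro i _
      apply ContinuousOn.intervalIntegrable
      have hcd : ContinuousOn (dirD (vy d i) (dirD (vy d i) f)) (strip d δ) :=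
        (contDiffOn_dirD (n := 0) isOpen_strip
          (contDiffOn_dirD (n := 1) isOpen_strip hf (vy d i)) (vy d i)).continuousOn
      exact (hcd.comp hcsl.continuousOn hmaps).mul hsin.continuousOn
  -- boundary values from oddness
  have hfp : f (Real.pi, z) = 0 := by
    have h1 : Real.pi + (0:ℝ) ∈ Ioo (-Real.pi - δ) (Real.pi + δ) := by
      constructor <;> simp <;> linarith
    have h2 : Real.pi - (0:ℝ) ∈ Ioo (-Real.pi - δ) (Real.pi + δ) := by
      constructor <;> simp <;> linarith
    have := hop 0 z h1 h2
    simp only [add_zero, sub_zero] at this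
    linear_combination this/2
  have hfm : f (-Real.pi, z) = 0 := by
    have h1 : -Real.pi + (0:ℝ) ∈ Ioo (-Real.pi - δ) (Real.pi + δ) := by
      constructor <;> simp <;> linarith
    have h2 : -Real.pi - (0:ℝ) ∈ Ioo (-Real.pi - δ) (Real.pi + δ) := by
      constructor <;> simp <;> linarith
    have := hom 0 z h1 h2
    simp only [add_zero, sub_zero] at this
    linear_combination this/2
  have htp := t_part hδ k hf z hfp hfm
  -- integrability for the final integral_add
  have hintY : IntervalIntegrable (fun t =>
      (∑ i : Fin d, dirD (vy d i) (dirD (vy d i) f) (t, z)) * (Real.sin (k * t) : ℂ))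
      volume (-Real.pi) Real.pi := by
    apply ContinuousOn.intervalIntegrable
    have : ContinuousOn (fun p : PT d => ∑ i : Fin d, dirD (vy d i) (dirD (vy d i) f) p)
        (strip d δ) := by
      apply continuousOn_finset_sum
      intro i _
      exact (contDiffOn_dirD (n := 0) isOpen_strip
        (contDiffOn_dirD (n := 1) isOpen_strip hf (vy d i)) (vy d i)).continuousOn
    exact (this.comp hcsl.continuousOn hmaps).mul hsin.continuousOn
  have hintT : IntervalIntegrable (fun t =>
      dirD (v0 d) (dirD (v0 d) f) (t, z) * (Real.sin (k * t) : ℂ))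
      volume (-Real.pi) Real.pi := by
    apply ContinuousOn.intervalIntegrable
    have hcd : ContinuousOn (dirD (v0 d) (dirD (v0 d) f)) (strip d δ) :=
      (contDiffOn_dirD (n := 0) isOpen_strip
        (contDiffOn_dirD (n := 1) isOpen_strip hf (v0 d)) (v0 d)).continuousOn
    exact (hcd.comp hcsl.continuousOn hmaps).mul hsin.continuousOn
  rw [hlapY]
  rw [mul_smul_comm, ← smul_sub]
  congr 1
  rw [show (k:ℂ)^2 * ∫ t in (-Real.pi)..Real.pi, f (t, z) * (Real.sin (k * t) : ℂ)
      = -∫ t in (-Real.pi)..Real.pi,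
          dirD (v0 d) (dirD (v0 d) f) (t, z) * (Real.sin (k * t) : ℂ) by
    rw [htp]; ring]
  rw [sub_neg_eq_add, ← intervalIntegral.integral_add hintY hintT]
  congr 1
  funext t
  unfold Dsum
  ring
end KeyStep

section Main
open Set
variable {d : ℕ}

lemma Dsum_reg {δ : ℝ} {f : PT d → ℂ} {n : ℕ}
    (hf : ContDiffOn ℝ ((n + 2 : ℕ)) f (strip d δ)) :
    ContDiffOn ℝ (n : ℕ) (Dsum f) (strip d δ) := by
  have h0 : ContDiffOn ℝ ((n + 1 : ℕ)) (dirD (v0 d) f) (strip d δ) :=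
    contDiffOn_dirD (n := n + 1) isOpen_strip (by exact_mod_cast hf) (v0 d)
  have h0' : ContDiffOn ℝ (n : ℕ) (dirD (v0 d) (dirD (v0 d) f)) (strip d δ) :=
    contDiffOn_dirD (n := n) isOpen_strip h0 (v0 d)
  have hi : ∀ i : Fin d, ContDiffOn ℝ (n : ℕ)
      (dirD (vy d i) (dirD (vy d i) f)) (strip d δ) := fun i =>
    contDiffOn_dirD (n := n) isOpen_strip
      (contDiffOn_dirD (n := n + 1) isOpen_strip (by exact_mod_cast hf) (vy d i)) (vy d i)
  exact h0'.add (ContDiffOn.sum fun i _ => hi i)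


/-- if `h` is polyharmonic of order `N` on `(-π-δ, π+δ) × ℝ^d` and odd at
`t = 0`, `t = π` and `t = -π`, then the sine Fourier coefficients
`a_k(y) = (1/π) ∫_{-π}^{π} h(t,y) sin(kt) dt` satisfy `(Δ_y - k²)^N a_k = 0`. -/
theorem fourier_coeff_polyharmonic {d N : ℕ} (δ : ℝ) (hδ : 0 < δ)
    (h : ℝ × EuclideanSpace ℝ (Fin d) → ℂ)
    (hpoly : PolyharmonicOn N h
      (Ioo (-Real.pi - δ) (Real.pi + δ) ×ˢ (univ : Set (EuclideanSpace ℝ (Fin d)))))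
    (hodd0 : OddAt h (-Real.pi - δ) (Real.pi + δ) 0)
    (hoddp : OddAt h (-Real.pi - δ) (Real.pi + δ) Real.pi)
    (hoddm : OddAt h (-Real.pi - δ) (Real.pi + δ) (-Real.pi))
    (k : ℕ) (hk : 1 ≤ k) :
    ∀ y : EuclideanSpace ℝ (Fin d),
      ((fun f : EuclideanSpace ℝ (Fin d) → ℂ =>
          fun z => lapY f z - (k : ℂ) ^ 2 * f z)^[N]
        (fun z => (Real.pi)⁻¹ •
          ∫ t in (-Real.pi : ℝ)..Real.pi, h (t, z) * (Real.sin (k * t) : ℂ))) y = 0 := by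
  intro y
  have hπ := Real.pi_pos
  obtain ⟨hreg, hzero⟩ := hpoly
  have hreg' : ContDiffOn ℝ (2 * N : ℕ) h (strip d δ) := hreg
  set F : ℕ → (PT d → ℂ) := fun m => Dsum^[m] h with hF
  have hFreg : ∀ m, m ≤ N → ContDiffOn ℝ (2 * (N - m) : ℕ) (F m) (strip d δ) := by
    intro m
    induction m with
    | zero => intro _; simpa [hF] using hreg'
    | succ m ih =>
      intro hm
      have hm' : m ≤ N := Nat.le_of_succ_le hm
      have hstep : F (m + 1) = Dsum (F m) := Function.iterate_succ_apply' Dsum m h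
      rw [hstep]
      have heq : (2 * (N - m) : ℕ) = (2 * (N - (m + 1)) + 2 : ℕ) := by omega
      have := ih hm'
      rw [heq] at this
      exact Dsum_reg this
  have hC2 : ∀ m, m < N → ContDiffOn ℝ (2:ℕ) (F m) (strip d δ) := by
    intro m hm
    refine (hFreg m hm.le).of_le ?_
    exact_mod_cast Nat.cast_le.mpr (by omega : (2:ℕ) ≤ 2 * (N - m))
  have hFodd : ∀ m, m ≤ N →
      OddAt (F m) (-Real.pi - δ) (Real.pi + δ) Real.pi ∧
      OddAt (F m) (-Real.pi - δ) (Real.pi + δ) (-Real.pi) := by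
    intro m
    induction m with
    | zero => intro _; exact ⟨hoddp, hoddm⟩
    | succ m ih =>
      intro hm
      have hm' : m < N := hm
      have hstep : F (m + 1) = Dsum (F m) := Function.iterate_succ_apply' Dsum m h
      rw [hstep]
      obtain ⟨h1, h2⟩ := ih hm'.le
      exact ⟨Dsum_odd hδ (hC2 m hm') (Or.inl rfl) h1,
        Dsum_odd hδ (hC2 m hm') (Or.inr rfl) h2⟩
  have hEq : ∀ m, m ≤ N → EqOn (lap^[m] h) (F m) (strip d δ) := by
    intro m
    induction m with
    | zero => intro _; exact fun p _ => rfl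
    | succ m ih =>
      intro hm
      have hm' : m < N := hm
      intro p hp
      have e1 : lap^[m+1] h p = lap (lap^[m] h) p := by
        rw [Function.iterate_succ_apply']
      have e2 : lap (lap^[m] h) p = lap (F m) p :=
        lap_congr isOpen_strip (ih hm'.le) hp
      have e3 : lap (F m) p = Dsum (F m) p := lap_eq_Dsum isOpen_strip (hC2 m hm') hp
      have e4 : F (m + 1) = Dsum (F m) := Function.iterate_succ_apply' Dsum m h
      rw [e1, e2, e3, e4]
  have hP : ∀ m, m ≤ N → ∀ z : EuclideanSpace ℝ (Fin d),
      ((fun f : EuclideanSpace ℝ (Fin d) → ℂ =>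
          fun z => lapY f z - (k : ℂ) ^ 2 * f z)^[m]
        (fun z => (Real.pi)⁻¹ •
          ∫ t in (-Real.pi : ℝ)..Real.pi, h (t, z) * (Real.sin (k * t) : ℂ))) z
      = (Real.pi)⁻¹ •
          ∫ t in (-Real.pi : ℝ)..Real.pi, F m (t, z) * (Real.sin (k * t) : ℂ) := by
    intro m
    induction m with
    | zero => intro _ z; rfl
    | succ m ih =>
      intro hm z
      have hm' : m < N := hm
      rw [Function.iterate_succ_apply']
      have hAF : ((fun f : EuclideanSpace ℝ (Fin d) → ℂ =>
          fun z => lapY f z - (k : ℂ) ^ 2 * f z)^[m]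
        (fun z => (Real.pi)⁻¹ •
          ∫ t in (-Real.pi : ℝ)..Real.pi, h (t, z) * (Real.sin (k * t) : ℂ)))
          = fun z => (Real.pi)⁻¹ •
            ∫ t in (-Real.pi : ℝ)..Real.pi, F m (t, z) * (Real.sin (k * t) : ℂ) :=
        funext (ih hm'.le)
      rw [hAF]
      have e4 : F (m + 1) = Dsum (F m) := Function.iterate_succ_apply' Dsum m h
      rw [e4]
      exact key_step hδ k (hC2 m hm') (hFodd m hm'.le).1 (hFodd m hm'.le).2 z
  rw [hP N le_rfl y]
  have hzero' : ∀ t ∈ uIcc (-Real.pi) Real.pi, F N (t, y) * (Real.sin (k * t) : ℂ) = 0 := by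
    intro t ht
    rw [uIcc_of_le (by linarith)] at ht
    have hmem : ((t, y) : PT d) ∈ strip d δ := strip_mem hδ ht y
    rw [← hEq N le_rfl hmem, hzero _ hmem, zero_mul]
  rw [intervalIntegral.integral_congr hzero']
  simp
end Main
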